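/- Let (N, m0, l, A) be a bounded labeled Petri net system with transitions partitioned into explicit transitions T_E and implicit transitions T_I such that the T_I-induced subnet is acyclic, and let G be its basis reachability graph. Then φ(L(G)) = P_E(L(N, m0)), i.e., the set of sequences φ(σ) over σ ∈ L(G) coincides with the projection over T_E of the set of firing sequences of (N, m0). -/

import Mathlib

open scoped BigOperators

/-- A Petri net on places `P` and transitions `T`, given by its `Pre` and `Post` matrices. -/
structure PetriNet (P T : Type) where
  Pre : P → T → ℕ
  Post : P → T → ℕ

namespace PetriNet

variable {P T A : Type}

/-- Incidence matrix `[N] = Post - Pre` (with values in ℤ). -/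
def inc (N : PetriNet P T) (p : P) (t : T) : ℤ :=
  (N.Post p t : ℤ) - (N.Pre p t : ℤ)

/-- Transition `t` is enabled at marking `m`. -/
def enabled (N : PetriNet P T) (m : P → ℕ) (t : T) : Prop :=
  ∀ p, N.Pre p t ≤ m p

/-- Marking obtained by firing `t` at `m`. -/
def fire (N : PetriNet P T) (m : P → ℕ) (t : T) : P → ℕ :=
  fun p => m p - N.Pre p t + N.Post p t

/-- `FireSeq N m s m'` means the sequence `s` is enabled at `m` and its firing yields `m'`,
written `m[s⟩m'`. -/
inductive FireSeq (N : PetriNet P T) : (P → ℕ) → List T → (P → ℕ) → Prop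
  | nil (m : P → ℕ) : FireSeq N m [] m
  | cons {m m' : P → ℕ} {t : T} {s : List T} :
      N.enabled m t → FireSeq N (N.fire m t) s m' → FireSeq N m (t :: s) m'

/-- `L(N, m0)`: the set of firing sequences enabled at `m0`. -/
def lang (N : PetriNet P T) (m0 : P → ℕ) : Set (List T) :=
  {s | ∃ m', N.FireSeq m0 s m'}

/-- `R(N, m0)`: the set of markings reachable from `m0`. -/
def reach (N : PetriNet P T) (m0 : P → ℕ) : Set (P → ℕ) :=
  {m | ∃ s, N.FireSeq m0 s m}

/-- A Petri net system is bounded if reachable markings are uniformly bounded. -/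
def Bounded (N : PetriNet P T) (m0 : P → ℕ) : Prop :=
  ∃ k : ℕ, ∀ m ∈ N.reach m0, ∀ p, m p ≤ k

/-- The `TL`-induced subnet: same places, transitions restricted to `TL`. -/
def restrict (N : PetriNet P T) (TL : Set T) : PetriNet P {t // t ∈ TL} where
  Pre := fun p t => N.Pre p t.1
  Post := fun p t => N.Post p t.1

/-- Parikh vector of a sequence. -/
def parikh [DecidableEq T] (s : List T) : T → ℕ := fun t => s.count t

/-- Projection of a sequence onto a subset `TL` of transitions (erasing the others). -/
def projSeq (TL : Set T) [DecidablePred (· ∈ TL)] (s : List T) : List T :=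
  s.filter (fun t => decide (t ∈ TL))

/-- Σ(m,t): explanations of `t` at `m`, i.e. sequences of implicit (`TI`) transitions whose
firing at `m` enables `t`. -/
def explanations (N : PetriNet P T) (TI : Set T) (m : P → ℕ) (t : T) : Set (List T) :=
  {s | (∀ u ∈ s, u ∈ TI) ∧ ∃ m', N.FireSeq m s m' ∧ N.enabled m' t}

/-- Y(m,t): e-vectors, Parikh vectors of explanations. -/
def eVectors [DecidableEq T] (N : PetriNet P T) (TI : Set T) (m : P → ℕ) (t : T) :
    Set (T → ℕ) :=
  parikh '' N.explanations TI m t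

/-- Y_min(m,t): componentwise-minimal e-vectors. -/
def eVectorsMin [DecidableEq T] (N : PetriNet P T) (TI : Set T) (m : P → ℕ) (t : T) :
    Set (T → ℕ) :=
  {y ∈ N.eVectors TI m t | ∀ y' ∈ N.eVectors TI m t, y' ≤ y → y' = y}

/-- Σ_min(m,t): explanations with no explanation of strictly smaller Parikh vector. -/
def explanationsMin [DecidableEq T] (N : PetriNet P T) (TI : Set T) (m : P → ℕ) (t : T) :
    Set (List T) :=
  {s ∈ N.explanations TI m t |
    ¬ ∃ s' ∈ N.explanations TI m t, parikh s' ≤ parikh s ∧ parikh s' ≠ parikh s}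

/-- Paths of the basis reachability graph: `(m,(t,y),m')` is an arc whenever `t ∈ TE`,
`y ∈ Y_min(m,t)` and `m' = m + [N]_I·y + [N](·,t)` (the vector `y` is supported on `TI`,
so the sum over all transitions equals the sum over `TI`). -/
inductive BrgPath [DecidableEq T] [Fintype T] (N : PetriNet P T) (TE TI : Set T) :
    (P → ℕ) → List (T × (T → ℕ)) → (P → ℕ) → Prop
  | nil (m : P → ℕ) : BrgPath N TE TI m [] m
  | cons {m m' m'' : P → ℕ} {t : T} {y : T → ℕ} {σ : List (T × (T → ℕ))} :
      t ∈ TE → y ∈ N.eVectorsMin TI m t →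
      (∀ p, (m' p : ℤ) = (m p : ℤ) + (∑ u, (y u : ℤ) * N.inc p u) + N.inc p t) →
      BrgPath N TE TI m' σ m'' → BrgPath N TE TI m ((t, y) :: σ) m''

/-- `L(G)`: the language of the basis reachability graph. -/
def brgLang [DecidableEq T] [Fintype T] (N : PetriNet P T) (TE TI : Set T) (m0 : P → ℕ) :
    Set (List (T × (T → ℕ))) :=
  {σ | ∃ m', BrgPath N TE TI m0 σ m'}

/-- The set of basis markings: states of the BRG reachable from `m0`. -/
def brgStates [DecidableEq T] [Fintype T] (N : PetriNet P T) (TE TI : Set T) (m0 : P → ℕ) :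
    Set (P → ℕ) :=
  {m | ∃ σ, BrgPath N TE TI m0 σ m}

/-- φ(σ): concatenation of the first entries of the arcs of σ. -/
def phi (σ : List (T × (T → ℕ))) : List T := σ.map Prod.fst

/-- φ'(σ): sum of the second entries of the arcs of σ. -/
def phi' (σ : List (T × (T → ℕ))) : T → ℕ := (σ.map Prod.snd).sum

/-- Arcs of the directed bipartite graph of the `TI`-induced subnet on `P ⊕ T`. -/
def subnetArc (N : PetriNet P T) (TI : Set T) : (P ⊕ T) → (P ⊕ T) → Prop
  | Sum.inl p, Sum.inr t => t ∈ TI ∧ 0 < N.Pre p t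
  | Sum.inr t, Sum.inl p => t ∈ TI ∧ 0 < N.Post p t
  | _, _ => False

/-- The `TI`-induced subnet is acyclic: no cycle in its directed bipartite graph. -/
def SubnetAcyclic (N : PetriNet P T) (TI : Set T) : Prop :=
  ∀ x : P ⊕ T, ¬ Relation.TransGen (N.subnetArc TI) x x

/-- `L(N_L, m0)` viewed as a set of sequences over `T` (via the inclusion `T_L ↪ T`). -/
def lowLang (N : PetriNet P T) (TL : Set T) (m0 : P → ℕ) : Set (List T) :=
  (fun s => s.map Subtype.val) '' (N.restrict TL).lang m0

/-- `l_L(L(N_L, m0))`: the label language of the low-level subnet system. -/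
def lowLabelLang (N : PetriNet P T) (l : T → A) (TL : Set T) (m0 : P → ℕ) : Set (List A) :=
  (fun s => s.map fun t => l t.1) '' (N.restrict TL).lang m0

/-- SNNI: `l(P_L(L(N,m0))) = l_L(L(N_L,m0))`, where `T_L = {t | l t ∈ A_L}`. -/
def SNNI (N : PetriNet P T) (m0 : P → ℕ) (l : T → A) (AL : Set A)
    [DecidablePred fun t => l t ∈ AL] : Prop :=
  (fun s => (s.filter fun t => decide (l t ∈ AL)).map l) '' N.lang m0 =
    N.lowLabelLang l {t | l t ∈ AL} m0

end PetriNet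

namespace PetriNet

variable {P T : Type} [Fintype T] [DecidableEq T]

lemma sum_ite_one_mul (t : T) (g : T → ℤ) :
    ∑ u, (if u = t then (1 : ℤ) else 0) * g u = g t := by
  rw [Finset.sum_eq_single t]
  · simp
  · intro b _ hb; simp [hb]
  · intro h; exact absurd (Finset.mem_univ t) h

lemma parikh_cons_int (t : T) (s : List T) (u : T) :
    (parikh (t :: s) u : ℤ) = (parikh s u : ℤ) + (if u = t then 1 else 0) := by
  by_cases h : u = t
  · subst h; simp [parikh, List.count_cons_self]
  · simp [parikh, List.count_cons, h, Ne.symm h]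

lemma fire_cast {N : PetriNet P T} {m : P → ℕ} {t : T} (h : N.enabled m t) (p : P) :
    ((N.fire m t) p : ℤ) = (m p : ℤ) + N.inc p t := by
  have := h p
  simp only [fire, inc]
  push_cast [Nat.cast_sub this]
  ring

/-- Marking equation. -/
lemma fireSeq_marking {N : PetriNet P T} {m m' : P → ℕ} {s : List T}
    (h : N.FireSeq m s m') (p : P) :
    (m' p : ℤ) = (m p : ℤ) + ∑ u, (parikh s u : ℤ) * N.inc p u := by
  induction h with
  | nil m => simp [parikh]
  | @cons m m' t s hen _ ih =>
      rw [ih]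
      have hsum : ∑ u, (parikh (t :: s) u : ℤ) * N.inc p u
          = (∑ u, (parikh s u : ℤ) * N.inc p u) + N.inc p t := by
        rw [← sum_ite_one_mul t (N.inc p), ← Finset.sum_add_distrib]
        apply Finset.sum_congr rfl
        intro u _
        rw [parikh_cons_int, add_mul]
      rw [hsum, fire_cast hen]
      ring

lemma FireSeq.append {N : PetriNet P T} {m m1 m2 : P → ℕ} {s1 s2 : List T}
    (h1 : N.FireSeq m s1 m1) (h2 : N.FireSeq m1 s2 m2) : N.FireSeq m (s1 ++ s2) m2 := by
  induction h1 with
  | nil => exact h2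
  | cons hen _ ih => exact .cons hen (ih h2)

lemma marking_unique {m1 m2 : P → ℕ} (h : ∀ p : P, (m1 p : ℤ) = (m2 p : ℤ)) : m1 = m2 :=
  funext fun p => Nat.cast_injective (h p)

/-- Murata-style theorem for acyclic subnets: any nonnegative solution of the state
equation supported on `TI` is realizable by a firing sequence. -/
lemma exists_fireSeq_of_nonneg {N : PetriNet P T} {TI : Set T}
    (hacyc : N.SubnetAcyclic TI) :
    ∀ (n : ℕ) (y : T → ℕ), (∑ u, y u) ≤ n → (∀ u, y u ≠ 0 → u ∈ TI) →
    ∀ m : P → ℕ, (∀ p, 0 ≤ (m p : ℤ) + ∑ u, (y u : ℤ) * N.inc p u) →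
    ∃ s m', (∀ u ∈ s, u ∈ TI) ∧ parikh s = y ∧ N.FireSeq m s m' := by
  intro n
  induction n with
  | zero =>
      intro y hy _ m _
      have : y = fun _ => 0 := by
        funext u
        exact Nat.eq_zero_of_le_zero (le_trans (Finset.single_le_sum
          (f := y) (fun i _ => Nat.zero_le _) (Finset.mem_univ u)) hy)
      exact ⟨[], m, by simp, by funext u; simp [parikh, this], .nil m⟩
  | succ n ih =>
      intro y hy hsupp m hm
      by_cases hz : ∀ u, y u = 0
      · exact ⟨[], m, by simp, by funext u; simp [parikh, hz u], .nil m⟩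
      push_neg at hz
      -- find a minimal (w.r.t. subnet reachability) transition in the support of y
      have hwf : WellFounded (fun u v : T =>
          Relation.TransGen (N.subnetArc TI) (Sum.inr u) (Sum.inr v)) := by
        have : IsIrrefl T (fun u v : T =>
            Relation.TransGen (N.subnetArc TI) (Sum.inr u) (Sum.inr v)) :=
          ⟨fun a h => hacyc _ h⟩
        have : IsTrans T (fun u v : T =>
            Relation.TransGen (N.subnetArc TI) (Sum.inr u) (Sum.inr v)) :=
          ⟨fun a b c h1 h2 => h1.trans h2⟩
        exact Finite.wellFounded_of_trans_of_irrefl _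
      obtain ⟨t, ht, htmin⟩ := hwf.has_min {u | y u ≠ 0} hz
      have htTI : t ∈ TI := hsupp t ht
      -- no transition in the support of y produces tokens in input places of t
      have hpost : ∀ p, 0 < N.Pre p t → ∀ u, y u ≠ 0 → N.Post p u = 0 := by
        intro p hp u hu
        by_contra hpost
        have a1 : N.subnetArc TI (Sum.inr u) (Sum.inl p) :=
          show u ∈ TI ∧ 0 < N.Post p u from ⟨hsupp u hu, Nat.pos_of_ne_zero hpost⟩
        have a2 : N.subnetArc TI (Sum.inl p) (Sum.inr t) :=
          show t ∈ TI ∧ 0 < N.Pre p t from ⟨htTI, hp⟩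
        exact htmin u hu (Relation.TransGen.head a1 (Relation.TransGen.single a2))
      -- t is enabled at m
      have hen : N.enabled m t := by
        intro p
        rcases Nat.eq_zero_or_pos (N.Pre p t) with h0 | hpos
        · simp [h0]
        have hsum : ∑ u, (y u : ℤ) * N.inc p u = - ∑ u, (y u : ℤ) * N.Pre p u := by
          rw [← Finset.sum_neg_distrib]
          apply Finset.sum_congr rfl
          intro u _
          rcases Nat.eq_zero_or_pos (y u) with h | h
          · simp [h]
          · have := hpost p hpos u h.ne'
            simp [inc, this]
        have := hm p
        rw [hsum] at this
        have hle : ∑ u, (y u : ℤ) * N.Pre p u ≤ (m p : ℤ) := by linarith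
        have hsingle : (y t : ℤ) * N.Pre p t ≤ ∑ u, (y u : ℤ) * N.Pre p u :=
          Finset.single_le_sum (f := fun u => (y u : ℤ) * N.Pre p u)
            (fun i _ => mul_nonneg (Int.natCast_nonneg _) (Int.natCast_nonneg _))
            (Finset.mem_univ t)
        have hyt : (1 : ℤ) ≤ (y t : ℤ) := by exact_mod_cast Nat.one_le_iff_ne_zero.mpr ht
        have : (N.Pre p t : ℤ) ≤ (m p : ℤ) := by nlinarith [Int.natCast_nonneg (N.Pre p t)]
        exact_mod_cast this
      -- fire t and recurse
      set y' : T → ℕ := Function.update y t (y t - 1) with hy'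
      have hyt1 : 1 ≤ y t := Nat.one_le_iff_ne_zero.mpr ht
      have hy'cast : ∀ u, (y' u : ℤ) = (y u : ℤ) - (if u = t then 1 else 0) := by
        intro u
        by_cases h : u = t
        · subst h; simp [hy', Nat.cast_sub hyt1]
        · simp [hy', Function.update_of_ne h, h]
      have hsum' : ∀ p, ∑ u, (y' u : ℤ) * N.inc p u
          = (∑ u, (y u : ℤ) * N.inc p u) - N.inc p t := by
        intro p
        rw [← sum_ite_one_mul t (N.inc p), ← Finset.sum_sub_distrib]
        apply Finset.sum_congr rfl
        intro u _
        rw [hy'cast, sub_mul]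
      have hlt : ∑ u, y' u < ∑ u, y u := by
        apply Finset.sum_lt_sum
        · intro i _
          by_cases h : i = t
          · subst h; simp only [hy', Function.update_self]; omega
          · simp [hy', Function.update_of_ne h]
        · exact ⟨t, Finset.mem_univ t, by simp only [hy', Function.update_self]; omega⟩
      have hle' : ∑ u, y' u ≤ n := by omega
      have hsupp' : ∀ u, y' u ≠ 0 → u ∈ TI := by
        intro u hu
        apply hsupp
        by_cases h : u = t
        · subst h; exact ht
        · simpa [hy', Function.update_of_ne h] using hu
      have hm' : ∀ p, 0 ≤ ((N.fire m t) p : ℤ) + ∑ u, (y' u : ℤ) * N.inc p u := by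
        intro p
        rw [fire_cast hen, hsum']
        have := hm p
        linarith
      obtain ⟨s, m', hsTI, hpk, hfs⟩ := ih y' hle' hsupp' (N.fire m t) hm'
      refine ⟨t :: s, m', ?_, ?_, .cons hen hfs⟩
      · intro u hu
        rcases List.mem_cons.mp hu with h | h
        · subst h; exact htTI
        · exact hsTI u h
      · funext u
        have h1 : (parikh (t :: s) u : ℤ) = (y u : ℤ) := by
          rw [parikh_cons_int, hpk]
          rw [hy'cast]
          ring
        exact_mod_cast h1
  termination_by n => n

/-- Every e-vector dominates a minimal e-vector. -/
lemma exists_min_eVector {N : PetriNet P T} {TI : Set T} {m : P → ℕ} {t : T} :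
    ∀ (n : ℕ) (z : T → ℕ), (∑ u, z u) ≤ n → z ∈ N.eVectors TI m t →
    ∃ y ∈ N.eVectorsMin TI m t, y ≤ z := by
  intro n
  induction n with
  | zero =>
      intro z hz hmem
      have hz0 : ∀ u, z u = 0 := fun u =>
        Nat.eq_zero_of_le_zero (le_trans (Finset.single_le_sum
          (f := z) (fun i _ => Nat.zero_le _) (Finset.mem_univ u)) hz)
      refine ⟨z, ⟨hmem, ?_⟩, le_refl z⟩
      intro y' _ hy'
      funext u
      have h1 : y' u ≤ z u := hy' u
      have h2 := hz0 u
      omega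
  | succ n ih =>
      intro z hz hmem
      by_cases hmin : ∀ y' ∈ N.eVectors TI m t, y' ≤ z → y' = z
      · exact ⟨z, ⟨hmem, hmin⟩, le_refl z⟩
      push_neg at hmin
      obtain ⟨y', hy'mem, hy'le, hy'ne⟩ := hmin
      have hlt : ∑ u, y' u < ∑ u, z u := by
        apply Finset.sum_lt_sum
        · intro i _; exact hy'le i
        · by_contra h
          push_neg at h
          exact hy'ne (funext fun u => le_antisymm (hy'le u) (h u (Finset.mem_univ u)))
      obtain ⟨y, hy, hyle⟩ := ih y' (by omega) hy'mem
      exact ⟨y, hy, le_trans hyle hy'le⟩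

/-- Soundness: every BRG path is realized by a firing sequence. -/
lemma brg_sound {N : PetriNet P T} {TE TI : Set T} [DecidablePred (· ∈ TE)]
    (hdisj : Disjoint TE TI) :
    ∀ {σ : List (T × (T → ℕ))} {m m'' : P → ℕ}, N.BrgPath TE TI m σ m'' →
    ∃ s, N.FireSeq m s m'' ∧ projSeq TE s = phi σ := by
  intro σ m m'' hpath
  induction hpath with
  | nil m => exact ⟨[], .nil m, rfl⟩
  | @cons m m' m'' t y σ ht hy heq hrest ih =>
      obtain ⟨sI, ⟨hsTI, M, hfs, hen⟩, hpk⟩ := hy.1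
      have hM : N.fire M t = m' := by
        apply marking_unique
        intro p
        rw [fire_cast hen, fireSeq_marking hfs p, hpk, heq p]
      obtain ⟨s', hfs', hproj'⟩ := ih
      refine ⟨sI ++ t :: s', ?_, ?_⟩
      · refine hfs.append (.cons hen ?_)
        rw [hM]; exact hfs'
      · have hfil : List.filter (fun u => decide (u ∈ TE)) sI = [] := by
          apply List.filter_eq_nil_iff.mpr
          intro u hu
          simp only [decide_eq_true_eq]
          exact Set.disjoint_right.mp hdisj (hsTI u hu)
        have hstep : projSeq TE (sI ++ t :: s') = t :: projSeq TE s' := by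
          simp [projSeq, List.filter_append, hfil, List.filter_cons, ht]
        rw [hstep, hproj']
        rfl

/-- Completeness: every firing sequence is simulated by a BRG path, relative to a
basis marking `mb` and a residual vector `z` of pending implicit transitions. -/
lemma brg_complete {N : PetriNet P T} {TE TI : Set T} [DecidablePred (· ∈ TE)]
    (hcover : TE ∪ TI = Set.univ) (hacyc : N.SubnetAcyclic TI) :
    ∀ (s : List T) (mr mb : P → ℕ) (z : T → ℕ) (m' : P → ℕ),
      (∀ u, z u ≠ 0 → u ∈ TI) →
      (∀ p, (mr p : ℤ) = (mb p : ℤ) + ∑ u, (z u : ℤ) * N.inc p u) →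
      N.FireSeq mr s m' →
      ∃ σ m'', N.BrgPath TE TI mb σ m'' ∧ phi σ = projSeq TE s := by
  intro s
  induction s with
  | nil =>
      intro mr mb z m' _ _ _
      exact ⟨[], mb, .nil mb, rfl⟩
  | cons t s' ih =>
      intro mr mb z m' hzsupp hzeq hfs
      rcases hfs with _ | ⟨hen, hrest⟩
      by_cases htE : t ∈ TE
      · -- explicit transition: take a minimal explanation
        have hnneg : ∀ p, 0 ≤ (mb p : ℤ) + ∑ u, (z u : ℤ) * N.inc p u := by
          intro p; rw [← hzeq p]; exact Int.natCast_nonneg _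
        obtain ⟨sI, M, hsTI, hpk, hfsI⟩ :=
          exists_fireSeq_of_nonneg hacyc (∑ u, z u) z le_rfl hzsupp mb hnneg
        have hMr : M = mr := by
          apply marking_unique
          intro p
          rw [fireSeq_marking hfsI p, hpk, hzeq p]
        have hzY : z ∈ N.eVectors TI mb t := by
          refine ⟨sI, ⟨hsTI, M, hfsI, ?_⟩, hpk⟩
          rw [hMr]; exact hen
        obtain ⟨y, hymin, hyle⟩ := exists_min_eVector (∑ u, z u) z le_rfl hzY
        obtain ⟨sy, ⟨hsyTI, My, hfsy, heny⟩, hpky⟩ := hymin.1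
        set mb' := N.fire My t with hmb'
        have hmb'eq : ∀ p, (mb' p : ℤ)
            = (mb p : ℤ) + (∑ u, (y u : ℤ) * N.inc p u) + N.inc p t := by
          intro p
          rw [hmb', fire_cast heny, fireSeq_marking hfsy p, hpky]
        set z' : T → ℕ := fun u => z u - y u with hz'
        have hz'cast : ∀ u, (z' u : ℤ) = (z u : ℤ) - (y u : ℤ) := by
          intro u; simp [hz', Nat.cast_sub (hyle u)]
        have hz'supp : ∀ u, z' u ≠ 0 → u ∈ TI := by
          intro u hu
          apply hzsupp
          simp only [hz'] at hu
          omega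
        have hzeq' : ∀ p, ((N.fire mr t) p : ℤ)
            = (mb' p : ℤ) + ∑ u, (z' u : ℤ) * N.inc p u := by
          intro p
          rw [fire_cast hen, hzeq p, hmb'eq p]
          have : ∑ u, (z' u : ℤ) * N.inc p u
              = (∑ u, (z u : ℤ) * N.inc p u) - ∑ u, (y u : ℤ) * N.inc p u := by
            rw [← Finset.sum_sub_distrib]
            apply Finset.sum_congr rfl
            intro u _
            rw [hz'cast, sub_mul]
          rw [this]
          ring
        obtain ⟨σ, m'', hpath, hphi⟩ := ih (N.fire mr t) mb' z' m' hz'supp hzeq' hrest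
        refine ⟨(t, y) :: σ, m'', .cons htE hymin hmb'eq hpath, ?_⟩
        have hstep : projSeq TE (t :: s') = t :: projSeq TE s' := by
          simp [projSeq, List.filter_cons, htE]
        rw [hstep, ← hphi]
        rfl
      · -- implicit transition: add it to the residual
        have htI : t ∈ TI := by
          have : t ∈ TE ∪ TI := hcover ▸ Set.mem_univ t
          rcases this with h | h
          · exact absurd h htE
          · exact h
        set z' : T → ℕ := fun u => z u + (if u = t then 1 else 0) with hz'
        have hz'supp : ∀ u, z' u ≠ 0 → u ∈ TI := by
          intro u hu
          by_cases h : u = t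
          · subst h; exact htI
          · apply hzsupp; simpa [hz', h] using hu
        have hzeq' : ∀ p, ((N.fire mr t) p : ℤ)
            = (mb p : ℤ) + ∑ u, (z' u : ℤ) * N.inc p u := by
          intro p
          rw [fire_cast hen, hzeq p]
          have hcast : ∀ u, (z' u : ℤ) = (z u : ℤ) + (if u = t then 1 else 0) := by
            intro u; by_cases h : u = t <;> simp [hz', h]
          have : ∑ u, (z' u : ℤ) * N.inc p u
              = (∑ u, (z u : ℤ) * N.inc p u) + N.inc p t := by
            rw [← sum_ite_one_mul t (N.inc p), ← Finset.sum_add_distrib]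
            exact Finset.sum_congr rfl fun u _ => by rw [hcast, add_mul]
          rw [this]
          ring
        obtain ⟨σ, m'', hpath, hphi⟩ := ih (N.fire mr t) mb z' m' hz'supp hzeq' hrest
        refine ⟨σ, m'', hpath, ?_⟩
        rw [hphi]
        simp [projSeq, List.filter_cons, htE]

end PetriNet

/-- For a bounded LPNS with `T = T_E ∪ T_I` and acyclic `T_I`-induced subnet,
`φ(L(G)) = P_E(L(N, m0))`. -/
theorem brg_phi_language_eq_projection
    {P T A : Type} [Fintype P] [Fintype T] [DecidableEq T]
    (N : PetriNet P T) (m0 : P → ℕ) (l : T → A)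
    (TE TI : Set T) [DecidablePred (· ∈ TE)]
    (hcover : TE ∪ TI = Set.univ) (hdisj : Disjoint TE TI)
    (hbound : N.Bounded m0)
    (hacyc : N.SubnetAcyclic TI) :
    PetriNet.phi '' N.brgLang TE TI m0 = PetriNet.projSeq TE '' N.lang m0 := by
  ext x
  constructor
  · rintro ⟨σ, ⟨m'', hpath⟩, rfl⟩
    obtain ⟨s, hfs, hproj⟩ := PetriNet.brg_sound hdisj hpath
    exact ⟨s, ⟨m'', hfs⟩, hproj⟩
  · rintro ⟨s, ⟨m', hfs⟩, rfl⟩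
    obtain ⟨σ, m'', hpath, hphi⟩ :=
      PetriNet.brg_complete hcover hacyc s m0 m0 (fun _ => 0) m'
        (fun u hu => absurd rfl hu) (fun p => by simp) hfs
    exact ⟨σ, ⟨m'', hpath⟩, hphi⟩
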